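/- Let 0 < a < b, let f ∈ H²(A_{a,b}), and let f_a* and f_b* denote its L² boundary functions on the circles of radius a and b respectively. Then for every z ∈ A_{a,b} the Cauchy formula holds: f(z) = (1/2π) ∫₀^{2π} f_b*(be^{iφ}) · (be^{iφ})/(be^{iφ} − z) dφ − (1/2π) ∫₀^{2π} f_a*(ae^{iφ}) · (ae^{iφ})/(ae^{iφ} − z) dφ. -/

import Mathlib

open MeasureTheory Complex Filter Set

noncomputable section

/-- The annulus `A_{a,b} = {z : ℂ | a < |z| < b}`. -/
def cAnnulus (a b : ℝ) : Set ℂ := {z : ℂ | a < ‖z‖ ∧ ‖z‖ < b}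

/-- The point `r·e^{iφ}` on the circle of radius `r`. -/
def circ (r φ : ℝ) : ℂ := (r : ℂ) * Complex.exp (φ * Complex.I)

/-- The squared mean `M₂(f;r)² = (1/2π) ∫₀^{2π} |f(re^{iφ})|² dφ`. -/
def M2sq (f : ℂ → ℂ) (r : ℝ) : ℝ :=
  (1 / (2 * Real.pi)) * ∫ φ in (0:ℝ)..(2 * Real.pi), ‖f (circ r φ)‖ ^ 2

/-- Membership in the Hardy space `H²(A_{a,b})` of the annulus: `f` is analytic on the
annulus and `sup_{a<r<b} M₂(f;r) < ∞`. -/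
def MemH2 (a b : ℝ) (f : ℂ → ℂ) : Prop :=
  AnalyticOnNhd ℂ f (cAnnulus a b) ∧ ∃ C : ℝ, ∀ r ∈ Set.Ioo a b, M2sq f r ≤ C

/-- `g : ℝ → ℂ` (as a function of the angle `φ`) is the radial `L²` boundary limit of `f`
at radius `r₀`, the approach being through radii in `s`. -/
def IsBoundaryLimit (f : ℂ → ℂ) (r₀ : ℝ) (s : Set ℝ) (g : ℝ → ℂ) : Prop :=
  Filter.Tendsto (fun r => ∫ φ in (0:ℝ)..(2 * Real.pi), ‖f (circ r φ) - g φ‖ ^ 2)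
    (nhdsWithin r₀ s) (nhds 0)

/-- Membership in `L²(S¹)` for a boundary function given as a function of the angle. -/
def MemL2Circle (g : ℝ → ℂ) : Prop :=
  MemLp g 2 (volume.restrict (Set.Ioc (0:ℝ) (2 * Real.pi)))

lemma circ_eq_circleMap (r φ : ℝ) : circ r φ = circleMap 0 r φ := by
  simp [circ, circleMap]

lemma abs_circ (r : ℝ) (hr : 0 ≤ r) (φ : ℝ) : ‖circ r φ‖ = r := by
  simp [circ, Complex.norm_exp_ofReal_mul_I, _root_.abs_of_nonneg hr]

lemma circ_sub_ne (r φ : ℝ) (hr : 0 ≤ r) {z : ℂ} (hz : ‖z‖ ≠ r) :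
    circ r φ - z ≠ 0 := by
  intro h
  apply hz
  rw [sub_eq_zero] at h
  rw [← h, abs_circ r hr]

lemma circ_sub_abs_le (r φ : ℝ) (hr : 0 ≤ r) (z : ℂ) :
    |r - ‖z‖| ≤ ‖circ r φ - z‖ := by
  have := abs_norm_sub_norm_le (circ r φ) z
  simpa [abs_circ r hr, ] using this

/-- Lemma B: circle integral as angle integral. -/
lemma circleIntegral_eq_I_mul (f : ℂ → ℂ) (z : ℂ) (r : ℝ) :
    (∮ w in C(0, r), (w - z)⁻¹ • f w) =
      Complex.I * ∫ φ in (0:ℝ)..(2 * Real.pi), f (circ r φ) * (circ r φ / (circ r φ - z)) := by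
  rw [circleIntegral, ← intervalIntegral.integral_const_mul]
  refine intervalIntegral.integral_congr fun φ _ => ?_
  rw [deriv_circleMap, ← circ_eq_circleMap]
  simp only [smul_eq_mul]
  ring

/-- Cauchy formula on the annulus for two radii. -/
lemma annulus_cauchy (a b : ℝ) (ha : 0 < a) (hab : a < b) (f : ℂ → ℂ)
    (hd : DifferentiableOn ℂ f (cAnnulus a b)) {z : ℂ} (hz : z ∈ cAnnulus a b)
    {r₁ r₂ : ℝ} (h1 : r₁ ∈ Ioo a (‖z‖)) (h2 : r₂ ∈ Ioo (‖z‖) b) :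
    (∮ w in C(0, r₂), (w - z)⁻¹ • f w) - (∮ w in C(0, r₁), (w - z)⁻¹ • f w)
      = (2 * Real.pi * Complex.I) * f z := by
  have hopen : IsOpen (cAnnulus a b) := by
    have : cAnnulus a b = ((fun w : ℂ => ‖w‖) ⁻¹' Ioo a b) := by
      ext w; simp [cAnnulus, Set.mem_Ioo]
    rw [this]
    exact isOpen_Ioo.preimage continuous_norm
  have hr₁0 : 0 < r₁ := ha.trans h1.1
  have hr₂0 : 0 < r₂ := hr₁0.trans (h1.2.trans h2.1)
  have hsub : Metric.closedBall (0:ℂ) r₂ \ Metric.ball 0 r₁ ⊆ cAnnulus a b := by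
    rintro w ⟨hw1, hw2⟩
    simp only [Metric.mem_closedBall, Metric.mem_ball, Complex.dist_eq, sub_zero, not_lt] at hw1 hw2
    exact ⟨h1.1.trans_le hw2, hw1.trans_lt h2.2⟩
  have hle : r₁ ≤ r₂ := (h1.2.trans h2.1).le
  -- dslope trick
  have hnz : cAnnulus a b ∈ nhds z := hopen.mem_nhds hz
  have hds : DifferentiableOn ℂ (dslope f z) (cAnnulus a b) :=
    (Complex.differentiableOn_dslope hnz).mpr hd
  have key : (∮ w in C(0, r₂), dslope f z w) = ∮ w in C(0, r₁), dslope f z w := by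
    refine circleIntegral_eq_of_differentiable_on_annulus_off_countable hr₁0 hle
      countable_empty (hds.continuousOn.mono hsub) fun w hw => ?_
    have hw' : w ∈ cAnnulus a b := hsub ⟨Metric.ball_subset_closedBall hw.1.1, fun h => hw.1.2 (Metric.ball_subset_closedBall h)⟩
    exact hds.differentiableAt (hopen.mem_nhds hw')
  -- rewrite dslope integrals
  have habs : ∀ (r : ℝ), 0 < r → ‖z‖ ≠ r → r ∈ Ioo a b →
      (∮ w in C(0, r), dslope f z w)
        = (∮ w in C(0, r), (w - z)⁻¹ • f w) - (∮ w in C(0, r), (w - z)⁻¹) * f z := by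
    intro r hr hne hrin
    have hzr : ∀ w ∈ Metric.sphere (0:ℂ) r, w ≠ z := by
      intro w hw h
      subst h
      simp only [mem_sphere_iff_norm, sub_zero] at hw
      exact hne (by rw [hw])
    have hsph : Metric.sphere (0:ℂ) r ⊆ cAnnulus a b := by
      intro w hw
      rw [Metric.mem_sphere, Complex.dist_eq, sub_zero] at hw
      exact ⟨hw ▸ hrin.1, hw ▸ hrin.2⟩
    have hcinv : ContinuousOn (fun w : ℂ => (w - z)⁻¹) (Metric.sphere (0:ℂ) r) := by
      refine ContinuousOn.inv₀ (by fun_prop) fun w hw => sub_ne_zero.mpr (hzr w hw)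
    have hint1 : CircleIntegrable (fun w => (w - z)⁻¹ • f w) 0 r :=
      ContinuousOn.circleIntegrable hr.le (hcinv.smul (hd.continuousOn.mono hsph))
    have hint2 : CircleIntegrable (fun w => (w - z)⁻¹ * f z) 0 r :=
      ContinuousOn.circleIntegrable hr.le (hcinv.mul continuousOn_const)
    have hcongr : (∮ w in C(0, r), dslope f z w)
        = ∮ w in C(0, r), ((w - z)⁻¹ • f w - (w - z)⁻¹ * f z) := by
      refine circleIntegral.integral_congr hr.le fun w hw => ?_
      have hwz : w ≠ z := hzr w hw
      rw [dslope_of_ne f hwz, slope_def_field, smul_eq_mul]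
      field_simp [sub_ne_zero.mpr hwz]
    rw [hcongr, circleIntegral.integral_sub hint1 hint2]
    congr 1
    exact circleIntegral.integral_smul_const (fun w => (w - z)⁻¹) (f z) 0 r
  have hne₁ : ‖z‖ ≠ r₁ := h1.2.ne'
  have hne₂ : ‖z‖ ≠ r₂ := h2.1.ne
  rw [habs r₂ hr₂0 hne₂ ⟨h1.1.trans (h1.2.trans h2.1), h2.2⟩,
    habs r₁ hr₁0 hne₁ ⟨h1.1, h1.2.trans (h2.1.trans h2.2)⟩] at key
  have hB : (∮ w in C(0, r₂), (w - z)⁻¹) = 2 * Real.pi * Complex.I := by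
    refine circleIntegral.integral_sub_inv_of_mem_ball ?_
    simpa [Complex.dist_eq] using h2.1
  have hA : (∮ w in C(0, r₁), (w - z)⁻¹) = 0 := by
    refine circleIntegral_eq_zero_of_differentiable_on_off_countable hr₁0.le
      countable_empty (f := fun w => (w - z)⁻¹) ?_ ?_
    · intro w hw
      refine (ContinuousAt.continuousWithinAt ?_)
      refine ContinuousAt.inv₀ (by fun_prop) ?_
      refine sub_ne_zero.mpr fun h => ?_
      rw [Metric.mem_closedBall, Complex.dist_eq, sub_zero, h] at hw
      exact absurd (hw.trans_lt h1.2) (lt_irrefl _)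
    · intro w hw
      refine DifferentiableAt.inv (by fun_prop) ?_
      refine sub_ne_zero.mpr fun h => ?_
      have := hw.1
      rw [Metric.mem_ball, Complex.dist_eq, sub_zero, h] at this
      exact absurd (h1.2.trans this) (lt_irrefl _)
  rw [hB, hA, zero_mul, sub_zero] at key
  linear_combination key

/-- L² convergence to 0 implies L¹ convergence to 0 on the bounded interval. -/
lemma tendsto_L1_of_L2 {ι : Type*} {l : Filter ι} (u : ι → ℝ → ℂ)
    (hInt : ∀ᶠ i in l, IntervalIntegrable (fun φ => ‖u i φ‖) volume 0 (2 * Real.pi) ∧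
      IntervalIntegrable (fun φ => ‖u i φ‖ ^ 2) volume 0 (2 * Real.pi))
    (h2 : Tendsto (fun i => ∫ φ in (0:ℝ)..(2 * Real.pi), ‖u i φ‖ ^ 2) l (nhds 0)) :
    Tendsto (fun i => ∫ φ in (0:ℝ)..(2 * Real.pi), ‖u i φ‖) l (nhds 0) := by
  have hπ : (0:ℝ) < 2 * Real.pi := by positivity
  refine Metric.tendsto_nhds.mpr fun ε hε => ?_
  set δ : ℝ := ε / (2 * Real.pi + 1) with hδdef
  have hδ : 0 < δ := by positivity
  filter_upwards [hInt, Metric.tendsto_nhds.mp h2 (δ * δ) (mul_pos hδ hδ)] with i hi h2i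
  rw [Real.dist_eq, sub_zero] at h2i ⊢
  have hnonneg : 0 ≤ ∫ φ in (0:ℝ)..(2 * Real.pi), ‖u i φ‖ :=
    intervalIntegral.integral_nonneg hπ.le fun φ _ => norm_nonneg _
  rw [_root_.abs_of_nonneg hnonneg]
  have h2i' : (∫ φ in (0:ℝ)..(2 * Real.pi), ‖u i φ‖ ^ 2) < δ * δ :=
    (le_abs_self _).trans_lt h2i
  have hmono : (∫ φ in (0:ℝ)..(2 * Real.pi), ‖u i φ‖)
      ≤ ∫ φ in (0:ℝ)..(2 * Real.pi), (δ / 2 + ‖u i φ‖ ^ 2 / (2 * δ)) := by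
    refine intervalIntegral.integral_mono_on hπ.le hi.1 ?_ fun φ _ => ?_
    · exact (intervalIntegrable_const).add (hi.2.div_const _)
    · have h2δ : (0:ℝ) < 2 * δ := by positivity
      have key : ‖u i φ‖ * (2 * δ) ≤ (δ / 2 + ‖u i φ‖ ^ 2 / (2 * δ)) * (2 * δ) := by
        rw [add_mul, div_mul_cancel₀ _ h2δ.ne']
        nlinarith [sq_nonneg (‖u i φ‖ - δ)]
      exact le_of_mul_le_mul_right key h2δ
  have heval : (∫ φ in (0:ℝ)..(2 * Real.pi), (δ / 2 + ‖u i φ‖ ^ 2 / (2 * δ)))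
      = (2 * Real.pi) * (δ / 2) + (∫ φ in (0:ℝ)..(2 * Real.pi), ‖u i φ‖ ^ 2) / (2 * δ) := by
    rw [intervalIntegral.integral_add intervalIntegrable_const (hi.2.div_const _),
      intervalIntegral.integral_div, intervalIntegral.integral_const]
    simp
    ring
  have : (∫ φ in (0:ℝ)..(2 * Real.pi), ‖u i φ‖)
      ≤ (2 * Real.pi) * (δ / 2) + (∫ φ in (0:ℝ)..(2 * Real.pi), ‖u i φ‖ ^ 2) / (2 * δ) :=
    heval ▸ hmono
  have hlast : (∫ φ in (0:ℝ)..(2 * Real.pi), ‖u i φ‖ ^ 2) / (2 * δ) < δ / 2 := by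
    rw [div_lt_iff₀ (by positivity)]
    nlinarith
  have hεδ : (2 * Real.pi + 1) * δ = ε := by
    rw [hδdef]; field_simp
  nlinarith [Real.pi_pos]

lemma abs_circ' (r : ℝ) (hr : 0 ≤ r) (φ : ℝ) : ‖circ r φ‖ = r := by
  simp [circ, Complex.norm_exp_ofReal_mul_I, _root_.abs_of_nonneg hr]

lemma kernel_norm_le {z : ℂ} {r δ Rm : ℝ} (hr : 0 ≤ r) (hRm : r ≤ Rm) (hδ : 0 < δ) (φ : ℝ)
    (hrz : δ ≤ ‖circ r φ - z‖) :
    ‖circ r φ / (circ r φ - z)‖ ≤ Rm / δ := by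
  rw [norm_div, abs_circ' r hr]
  exact div_le_div₀ (hr.trans hRm) hRm hδ hrz

lemma kernel_diff_norm_le {z : ℂ} {r ρ δ : ℝ} (φ : ℝ) (hδ : 0 < δ)
    (hrz : δ ≤ ‖circ r φ - z‖) (hρz : δ ≤ ‖circ ρ φ - z‖) :
    ‖circ r φ / (circ r φ - z) - circ ρ φ / (circ ρ φ - z)‖
      ≤ ‖z‖ * |r - ρ| / δ ^ 2 := by
  have hw : circ r φ - z ≠ 0 := by
    intro h; rw [h] at hrz; simp at hrz; linarith
  have hv : circ ρ φ - z ≠ 0 := by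
    intro h; rw [h] at hρz; simp at hρz; linarith
  have hid : circ r φ / (circ r φ - z) - circ ρ φ / (circ ρ φ - z)
      = z * (circ ρ φ - circ r φ) / ((circ r φ - z) * (circ ρ φ - z)) := by
    field_simp
    ring
  have hdiff : ‖circ ρ φ - circ r φ‖ = |r - ρ| := by
    have : circ ρ φ - circ r φ = ((ρ : ℂ) - (r : ℂ)) * Complex.exp (φ * Complex.I) := by
      rw [circ, circ]; ring
    rw [this, norm_mul, Complex.norm_exp_ofReal_mul_I, mul_one, ← Complex.ofReal_sub, Complex.norm_real, Real.norm_eq_abs,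
      abs_sub_comm]
  rw [hid, norm_div, norm_mul, norm_mul, hdiff]
  refine div_le_div₀ (by positivity) le_rfl (by positivity) ?_
  calc δ ^ 2 = δ * δ := sq δ
  _ ≤ _ := mul_le_mul hrz hρz hδ.le (norm_nonneg _)

lemma continuous_circ (r : ℝ) : Continuous (circ r) := by
  unfold circ; fun_prop

lemma circ_sub_abs_le' (r φ : ℝ) (hr : 0 ≤ r) (z : ℂ) :
    |r - ‖z‖| ≤ ‖circ r φ - z‖ := by
  have := abs_norm_sub_norm_le (circ r φ) z
  simpa [abs_circ' r hr, ] using this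

lemma tendsto_boundary_integral (f : ℂ → ℂ) (g : ℝ → ℂ) (z : ℂ) (ρ δ Rm : ℝ)
    (hδ : 0 < δ) (hρ0 : 0 ≤ ρ) (hρR : ρ ≤ Rm)
    (hg : Integrable g (volume.restrict (Ioc (0:ℝ) (2 * Real.pi))))
    (hρz : δ ≤ |ρ - ‖z‖|)
    {l : Filter ℝ}
    (hl : Tendsto (fun r : ℝ => r) l (nhds ρ))
    (hev : ∀ᶠ r in l, (0 ≤ r ∧ r ≤ Rm ∧ δ ≤ |r - ‖z‖|) ∧
      Continuous (fun φ => f (circ r φ)) ∧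
      MemLp (fun φ => f (circ r φ) - g φ) 2 (volume.restrict (Ioc (0:ℝ) (2 * Real.pi))))
    (hL2 : Tendsto (fun r => ∫ φ in (0:ℝ)..(2 * Real.pi), ‖f (circ r φ) - g φ‖ ^ 2) l (nhds 0)) :
    Tendsto (fun r => ∫ φ in (0:ℝ)..(2 * Real.pi), f (circ r φ) * (circ r φ / (circ r φ - z)))
      l (nhds (∫ φ in (0:ℝ)..(2 * Real.pi), g φ * (circ ρ φ / (circ ρ φ - z)))) := by
  have hπ : (0:ℝ) < 2 * Real.pi := by positivity
  have hIoc : Set.uIoc (0:ℝ) (2 * Real.pi) = Ioc (0:ℝ) (2 * Real.pi) := uIoc_of_le hπ.le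
  set s := ‖z‖ with hs
  set M : ℝ := Rm / δ with hM
  set C : ℝ := s / δ ^ 2 with hC
  -- interval integrability of g
  have hgI : IntervalIntegrable g volume 0 (2 * Real.pi) := by
    rw [intervalIntegrable_iff, hIoc]; exact hg
  set G : ℝ := ∫ φ in (0:ℝ)..(2 * Real.pi), ‖g φ‖ with hG
  have hG0 : 0 ≤ G := intervalIntegral.integral_nonneg hπ.le fun φ _ => norm_nonneg _
  -- kernel continuity at any radius r with δ ≤ |r - s|
  have hKcont : ∀ r : ℝ, 0 ≤ r → δ ≤ |r - s| →
      Continuous (fun φ => circ r φ / (circ r φ - z)) := by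
    intro r hr0 hrz
    refine (continuous_circ r).div ((continuous_circ r).sub continuous_const) fun φ => ?_
    intro h
    have := (hδ.trans_le (hrz.trans (circ_sub_abs_le' r φ hr0 z)))
    rw [h] at this; simp at this
  have hKρ : Continuous (fun φ => circ ρ φ / (circ ρ φ - z)) := hKcont ρ hρ0 hρz
  -- interval integrability builder: g times a bounded continuous kernel
  have hmul : ∀ (h : ℝ → ℂ), Integrable h (volume.restrict (Ioc (0:ℝ) (2 * Real.pi))) →
      ∀ (K : ℝ → ℂ), Continuous K → ∀ c : ℝ, (∀ φ, ‖K φ‖ ≤ c) →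
      IntervalIntegrable (fun φ => h φ * K φ) volume 0 (2 * Real.pi) := by
    intro h hh K hK c hc
    rw [intervalIntegrable_iff, hIoc]
    have : Integrable (fun φ => K φ * h φ) (volume.restrict (Ioc (0:ℝ) (2 * Real.pi))) :=
      hh.bdd_mul hK.aestronglyMeasurable.restrict (ae_of_all _ hc)
    exact this.congr (ae_of_all _ fun φ => mul_comm _ _)
  -- the L¹ norms tend to zero
  have hE : Tendsto (fun r => ∫ φ in (0:ℝ)..(2 * Real.pi), ‖f (circ r φ) - g φ‖) l (nhds 0) := by
    refine tendsto_L1_of_L2 (fun r φ => f (circ r φ) - g φ) ?_ hL2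
    filter_upwards [hev] with r hr
    obtain ⟨-, -, hu2⟩ := hr
    constructor
    · rw [intervalIntegrable_iff, hIoc]
      exact (hu2.integrable one_le_two).norm
    · rw [intervalIntegrable_iff, hIoc]
      exact hu2.norm.integrable_sq
  -- main eventual bound
  have hbound : ∀ᶠ r in l,
      ‖(∫ φ in (0:ℝ)..(2 * Real.pi), f (circ r φ) * (circ r φ / (circ r φ - z)))
        - ∫ φ in (0:ℝ)..(2 * Real.pi), g φ * (circ ρ φ / (circ ρ φ - z))‖
      ≤ M * (∫ φ in (0:ℝ)..(2 * Real.pi), ‖f (circ r φ) - g φ‖) + C * G * |r - ρ| := by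
    filter_upwards [hev] with r hr
    obtain ⟨⟨hr0, hrR, hrz⟩, hfc, hu2⟩ := hr
    set u : ℝ → ℂ := fun φ => f (circ r φ) - g φ with hu
    set Kr : ℝ → ℂ := fun φ => circ r φ / (circ r φ - z) with hKr
    set Kρ : ℝ → ℂ := fun φ => circ ρ φ / (circ ρ φ - z) with hKρ'
    have hKrc : Continuous Kr := hKcont r hr0 hrz
    have hKrb : ∀ φ, ‖Kr φ‖ ≤ M :=
      fun φ => kernel_norm_le hr0 hrR hδ φ (hrz.trans (circ_sub_abs_le' r φ hr0 z))
    have hKρb : ∀ φ, ‖Kρ φ‖ ≤ M :=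
      fun φ => kernel_norm_le hρ0 hρR hδ φ (hρz.trans (circ_sub_abs_le' ρ φ hρ0 z))
    have hΔb : ∀ φ, ‖Kr φ - Kρ φ‖ ≤ C * |r - ρ| := by
      intro φ
      have := kernel_diff_norm_le (z := z) (r := r) (ρ := ρ) φ hδ
        (hrz.trans (circ_sub_abs_le' r φ hr0 z)) (hρz.trans (circ_sub_abs_le' ρ φ hρ0 z))
      calc ‖Kr φ - Kρ φ‖ ≤ ‖z‖ * |r - ρ| / δ ^ 2 := this
        _ = C * |r - ρ| := by rw [hC]; ring
    have hui : Integrable u (volume.restrict (Ioc (0:ℝ) (2 * Real.pi))) :=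
      hu2.integrable one_le_two
    have huI : IntervalIntegrable u volume 0 (2 * Real.pi) := by
      rw [intervalIntegrable_iff, hIoc]; exact hui
    have I1 : IntervalIntegrable (fun φ => u φ * Kr φ) volume 0 (2 * Real.pi) :=
      hmul u hui Kr hKrc M hKrb
    have I2 : IntervalIntegrable (fun φ => g φ * Kr φ) volume 0 (2 * Real.pi) :=
      hmul g hg Kr hKrc M hKrb
    have I3 : IntervalIntegrable (fun φ => g φ * Kρ φ) volume 0 (2 * Real.pi) :=
      hmul g hg Kρ hKρ M hKρb
    -- split the difference
    have hsplit : (∫ φ in (0:ℝ)..(2 * Real.pi), f (circ r φ) * Kr φ)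
        - (∫ φ in (0:ℝ)..(2 * Real.pi), g φ * Kρ φ)
        = (∫ φ in (0:ℝ)..(2 * Real.pi), u φ * Kr φ)
          + ((∫ φ in (0:ℝ)..(2 * Real.pi), g φ * Kr φ)
            - ∫ φ in (0:ℝ)..(2 * Real.pi), g φ * Kρ φ) := by
      have e1 : (∫ φ in (0:ℝ)..(2 * Real.pi), f (circ r φ) * Kr φ)
          = ∫ φ in (0:ℝ)..(2 * Real.pi), (u φ * Kr φ + g φ * Kr φ) := by
        refine intervalIntegral.integral_congr fun φ _ => ?_
        simp only [hu]; ring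
      rw [e1, intervalIntegral.integral_add I1 I2]
      ring
    have hA : ‖∫ φ in (0:ℝ)..(2 * Real.pi), u φ * Kr φ‖
        ≤ M * ∫ φ in (0:ℝ)..(2 * Real.pi), ‖u φ‖ := by
      refine (intervalIntegral.norm_integral_le_integral_norm hπ.le).trans ?_
      rw [← intervalIntegral.integral_const_mul]
      refine intervalIntegral.integral_mono_on hπ.le I1.norm (huI.norm.const_mul M)
        fun φ _ => ?_
      rw [norm_mul]
      calc ‖u φ‖ * ‖Kr φ‖ ≤ ‖u φ‖ * M :=
            mul_le_mul_of_nonneg_left (hKrb φ) (norm_nonneg _)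
        _ = M * ‖u φ‖ := mul_comm _ _
    have hB : ‖(∫ φ in (0:ℝ)..(2 * Real.pi), g φ * Kr φ)
        - ∫ φ in (0:ℝ)..(2 * Real.pi), g φ * Kρ φ‖ ≤ C * G * |r - ρ| := by
      rw [← intervalIntegral.integral_sub I2 I3]
      have e2 : (∫ φ in (0:ℝ)..(2 * Real.pi), (g φ * Kr φ - g φ * Kρ φ))
          = ∫ φ in (0:ℝ)..(2 * Real.pi), g φ * (Kr φ - Kρ φ) := by
        refine intervalIntegral.integral_congr fun φ _ => ?_
        ring
      rw [e2]
      refine (intervalIntegral.norm_integral_le_integral_norm hπ.le).trans ?_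
      have : (∫ φ in (0:ℝ)..(2 * Real.pi), ‖g φ * (Kr φ - Kρ φ)‖)
          ≤ ∫ φ in (0:ℝ)..(2 * Real.pi), ‖g φ‖ * (C * |r - ρ|) := by
        refine intervalIntegral.integral_mono_on hπ.le ?_ (hgI.norm.mul_const _)
          fun φ _ => ?_
        · have heq : (fun φ => g φ * (Kr φ - Kρ φ)) = (fun φ => g φ * Kr φ - g φ * Kρ φ) :=
            funext fun φ => by ring
          exact (show IntervalIntegrable (fun φ => g φ * (Kr φ - Kρ φ)) volume 0 (2 * Real.pi)
            from heq ▸ (I2.sub I3)).norm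
        · rw [norm_mul]
          exact mul_le_mul_of_nonneg_left (hΔb φ) (norm_nonneg _)
      refine this.trans ?_
      rw [intervalIntegral.integral_mul_const]
      rw [hG]; ring_nf; exact le_rfl
    calc ‖_ - _‖ ≤ _ := by rw [hsplit]; exact norm_add_le _ _
      _ ≤ M * (∫ φ in (0:ℝ)..(2 * Real.pi), ‖u φ‖) + C * G * |r - ρ| :=
        add_le_add hA hB
  -- conclude by squeeze
  rw [tendsto_iff_norm_sub_tendsto_zero]
  refine squeeze_zero' (Eventually.of_forall fun r => norm_nonneg _) hbound ?_
  have hdist : Tendsto (fun r : ℝ => |r - ρ|) l (nhds 0) := by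
    have := tendsto_iff_dist_tendsto_zero.mp hl
    simpa [Real.dist_eq] using this
  have : Tendsto (fun r => M * (∫ φ in (0:ℝ)..(2 * Real.pi), ‖f (circ r φ) - g φ‖)
      + C * G * |r - ρ|) l (nhds (M * 0 + C * G * 0)) :=
    (hE.const_mul M).add (hdist.const_mul (C * G))
  simpa using this

/-- The Cauchy formula recovering `f ∈ H²(A_{a,b})` from its two `L²`
boundary functions. -/
theorem hardy_annulus_cauchy_formula (a b : ℝ) (ha : 0 < a) (hab : a < b)
    (f : ℂ → ℂ) (hf : MemH2 a b f) (fa fb : ℝ → ℂ)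
    (hfaL2 : MemL2Circle fa) (hfbL2 : MemL2Circle fb)
    (hfa : IsBoundaryLimit f a (Set.Ioo a b) fa)
    (hfb : IsBoundaryLimit f b (Set.Ioo a b) fb) :
    ∀ z ∈ cAnnulus a b,
      f z = (1 / (2 * Real.pi) : ℂ) *
              (∫ φ in (0:ℝ)..(2 * Real.pi), fb φ * (circ b φ / (circ b φ - z)))
            - (1 / (2 * Real.pi) : ℂ) *
              (∫ φ in (0:ℝ)..(2 * Real.pi), fa φ * (circ a φ / (circ a φ - z))) := by
  intro z hz
  obtain ⟨hza, hzb⟩ := hz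
  set s : ℝ := ‖z‖ with hsdef
  have hs0 : 0 < s := ha.trans hza
  have hopen : IsOpen (cAnnulus a b) := by
    have : cAnnulus a b = ((fun w : ℂ => ‖w‖) ⁻¹' Ioo a b) := by
      ext w; simp [cAnnulus, Set.mem_Ioo]
    rw [this]
    exact isOpen_Ioo.preimage continuous_norm
  have hd : DifferentiableOn ℂ f (cAnnulus a b) :=
    fun w hw => ((hf.1 w hw).differentiableAt).differentiableWithinAt
  set J : ℝ → ℂ := fun r => ∫ φ in (0:ℝ)..(2 * Real.pi),
    f (circ r φ) * (circ r φ / (circ r φ - z)) with hJ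
  -- the two-radius Cauchy identity
  have key : ∀ r₁ ∈ Ioo a s, ∀ r₂ ∈ Ioo s b, J r₂ - J r₁ = 2 * (Real.pi : ℂ) * f z := by
    intro r₁ h1 r₂ h2
    have h := annulus_cauchy a b ha hab f hd ⟨hza, hzb⟩ h1 h2
    rw [circleIntegral_eq_I_mul f z r₂, circleIntegral_eq_I_mul f z r₁] at h
    refine mul_left_cancel₀ Complex.I_ne_zero ?_
    linear_combination h
  -- continuity of `f` along circles
  have hcont : ∀ r ∈ Ioo a b, Continuous (fun φ => f (circ r φ)) := by
    intro r hr
    rw [continuous_iff_continuousAt]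
    intro φ
    have hmem : circ r φ ∈ cAnnulus a b := by
      constructor <;> rw [abs_circ r (ha.trans hr.1).le φ]
      exacts [hr.1, hr.2]
    exact (hd.continuousOn.continuousAt (hopen.mem_nhds hmem)).comp
      ((continuous_circ r).continuousAt)
  -- `MemLp` of differences
  have hmem2 : ∀ r ∈ Ioo a b, ∀ (g : ℝ → ℂ), MemL2Circle g →
      MemLp (fun φ => f (circ r φ) - g φ) 2
        (volume.restrict (Ioc (0:ℝ) (2 * Real.pi))) := by
    intro r hr g hgL2
    have hc := hcont r hr
    obtain ⟨Cb, hCb⟩ := (isCompact_Icc : IsCompact (Icc (0:ℝ) (2 * Real.pi))).exists_bound_of_continuousOn hc.continuousOn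
    refine MemLp.sub ?_ hgL2
    refine MemLp.of_bound hc.aestronglyMeasurable.restrict Cb ?_
    filter_upwards [ae_restrict_mem measurableSet_Ioc] with φ hφ
    exact hCb φ ⟨hφ.1.le, hφ.2⟩
  -- limit at the outer radius
  have HB : Tendsto J (nhdsWithin b (Ioo s b))
      (nhds (∫ φ in (0:ℝ)..(2 * Real.pi), fb φ * (circ b φ / (circ b φ - z)))) := by
    refine tendsto_boundary_integral f fb z b ((b - s)/2) b (by linarith) (by linarith)
      le_rfl (hfbL2.integrable one_le_two) ?_ ?_ ?_ ?_
    · rw [_root_.abs_of_nonneg (by linarith)]; linarith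
    · exact tendsto_id.mono_right nhdsWithin_le_nhds
    · have hhalf : ∀ᶠ r in nhdsWithin b (Ioo s b), (s + b)/2 < r :=
        (eventually_gt_nhds (by linarith)).filter_mono nhdsWithin_le_nhds
      filter_upwards [self_mem_nhdsWithin, hhalf] with r hrIoo hrhalf
      have hrab : r ∈ Ioo a b := ⟨hza.trans hrIoo.1, hrIoo.2⟩
      refine ⟨⟨by linarith [hrIoo.1], hrIoo.2.le, ?_⟩, hcont r hrab, hmem2 r hrab fb hfbL2⟩
      rw [_root_.abs_of_nonneg (by linarith [hrIoo.1])]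
      linarith
    · exact hfb.mono_left (nhdsWithin_mono b (Ioo_subset_Ioo_left hza.le))
  -- limit at the inner radius
  have HA : Tendsto J (nhdsWithin a (Ioo a s))
      (nhds (∫ φ in (0:ℝ)..(2 * Real.pi), fa φ * (circ a φ / (circ a φ - z)))) := by
    refine tendsto_boundary_integral f fa z a ((s - a)/2) s (by linarith) ha.le
      hza.le (hfaL2.integrable one_le_two) ?_ ?_ ?_ ?_
    · rw [abs_sub_comm, _root_.abs_of_nonneg (by linarith)]; linarith
    · exact tendsto_id.mono_right nhdsWithin_le_nhds
    · have hhalf : ∀ᶠ r in nhdsWithin a (Ioo a s), r < (a + s)/2 :=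
        (eventually_lt_nhds (by linarith)).filter_mono nhdsWithin_le_nhds
      filter_upwards [self_mem_nhdsWithin, hhalf] with r hrIoo hrhalf
      have hrab : r ∈ Ioo a b := ⟨hrIoo.1, hrIoo.2.trans hzb⟩
      refine ⟨⟨by linarith [hrIoo.1], by linarith [hrhalf], ?_⟩,
        hcont r hrab, hmem2 r hrab fa hfaL2⟩
      rw [abs_sub_comm, _root_.abs_of_nonneg (by linarith [hrIoo.2])]
      linarith
    · exact hfa.mono_left (nhdsWithin_mono a (Ioo_subset_Ioo_right hzb.le))
  have hb_ne : (nhdsWithin b (Ioo s b)).NeBot := right_nhdsWithin_Ioo_neBot hzb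
  have ha_ne : (nhdsWithin a (Ioo a s)).NeBot := left_nhdsWithin_Ioo_neBot hza
  set Jb : ℂ := ∫ φ in (0:ℝ)..(2 * Real.pi), fb φ * (circ b φ / (circ b φ - z)) with hJb
  set Ja : ℂ := ∫ φ in (0:ℝ)..(2 * Real.pi), fa φ * (circ a φ / (circ a φ - z)) with hJa
  -- for every inner radius, J r₁ = Jb - 2π f z
  have hid : ∀ r₁ ∈ Ioo a s, J r₁ = Jb - 2 * (Real.pi : ℂ) * f z := by
    intro r₁ h1
    have h1' : Tendsto J (nhdsWithin b (Ioo s b)) (nhds (J r₁ + 2 * (Real.pi : ℂ) * f z)) := by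
      refine Tendsto.congr' ?_ tendsto_const_nhds
      filter_upwards [self_mem_nhdsWithin] with r₂ h2
      have := key r₁ h1 r₂ h2
      linear_combination -this
    have := tendsto_nhds_unique h1' HB
    linear_combination this
  have hfinal : Ja = Jb - 2 * (Real.pi : ℂ) * f z := by
    have h2' : Tendsto J (nhdsWithin a (Ioo a s)) (nhds (Jb - 2 * (Real.pi : ℂ) * f z)) := by
      refine Tendsto.congr' ?_ tendsto_const_nhds
      filter_upwards [self_mem_nhdsWithin] with r₁ h1
      exact (hid r₁ h1).symm
    exact tendsto_nhds_unique HA h2'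
  have hπ : ((2 : ℂ) * (Real.pi : ℂ)) ≠ 0 := by
    simp [Real.pi_ne_zero]
  have : f z = (Jb - Ja) / (2 * (Real.pi : ℂ)) := by
    rw [hfinal]
    field_simp
    ring
  rw [this]
  ring
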